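/- The largest asymptotic density of a set of 2-event signals distinguishable by a receiver experiencing unbounded time dilation is 6/π²: the limit as N → ∞ of |{ (t_1, t_2) ∈ ℕ² : t_1, t_2 ≥ 1, t_1 + t_2 ≤ N, gcd(t_1, t_2) = 1 }| / binomial(N, 2) equals 6/π². -/

import Mathlib

open Filter

/-- The space of `k`-event signals: `k` inter-event intervals, each at least 1,
summing to at most `N`. -/
def SignalSpace (N k : ℕ) : Finset (Fin k → ℕ) :=
  (Fintype.piFinset fun _ => Finset.Icc 1 N).filter fun t => ∑ i, t i ≤ N

/-- The signals in `SignalSpace N k` whose coordinates are coprime (gcd 1). -/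
def CoprimeCode (N k : ℕ) : Finset (Fin k → ℕ) :=
  (SignalSpace N k).filter fun t => Finset.univ.gcd t = 1

namespace CoprimeDensityAux

open ArithmeticFunction ArithmeticFunction.Moebius Finset

def Pairs (M : ℕ) : Finset (ℕ × ℕ) :=
  (Finset.Icc 1 M ×ˢ Finset.Icc 1 M).filter fun p => p.1 + p.2 ≤ M

lemma sum_aux (M : ℕ) : ∑ a ∈ Finset.Icc 1 M, (M - a) = M.choose 2 := by
  induction M with
  | zero => simp
  | succ n ih =>
    rw [Finset.sum_Icc_succ_top (by omega)]
    have h : ∑ a ∈ Finset.Icc 1 n, (n + 1 - a) = (∑ a ∈ Finset.Icc 1 n, (n - a)) + n := by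
      have : ∀ a ∈ Finset.Icc 1 n, n + 1 - a = (n - a) + 1 := by
        intro a ha; simp at ha; omega
      rw [Finset.sum_congr rfl this, Finset.sum_add_distrib]
      simp [Nat.card_Icc]
    rw [h, ih, Nat.choose_succ_succ]
    simp [Nat.choose_one_right]
    omega

lemma pairs_card (M : ℕ) : (Pairs M).card = M.choose 2 := by
  have h1 : (Pairs M).card = ∑ a ∈ Finset.Icc 1 M, (M - a) := by
    rw [Pairs, Finset.card_filter, Finset.sum_product]
    refine Finset.sum_congr rfl fun a ha => ?_
    rw [← Finset.card_filter]
    have : (Finset.Icc 1 M).filter (fun b => a + b ≤ M) = Finset.Icc 1 (M - a) := by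
      ext b
      simp only [Finset.mem_filter, Finset.mem_Icc]
      simp at ha
      omega
    rw [this, Nat.card_Icc]
    omega
  rw [h1, sum_aux]

lemma dvd_filter_card (N d : ℕ) (hd : 1 ≤ d) :
    ((Pairs N).filter fun p => d ∣ p.1 ∧ d ∣ p.2).card = (Pairs (N/d)).card := by
  refine Finset.card_bij' (fun p _ => (p.1 / d, p.2 / d)) (fun p _ => (d * p.1, d * p.2))
    ?_ ?_ ?_ ?_
  · rintro ⟨a, b⟩ hp
    simp only [Pairs, Finset.mem_filter, Finset.mem_product, Finset.mem_Icc] at hp ⊢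
    obtain ⟨⟨⟨⟨h1a, h1b⟩, h2a, h2b⟩, hsum⟩, ⟨x, rfl⟩, ⟨y, rfl⟩⟩ := hp
    rw [Nat.mul_div_cancel_left _ hd, Nat.mul_div_cancel_left _ hd]
    have hx : 1 ≤ x := Nat.pos_of_ne_zero (by rintro rfl; simp at h1a)
    have hy : 1 ≤ y := Nat.pos_of_ne_zero (by rintro rfl; simp at h2a)
    refine ⟨⟨⟨hx, ?_⟩, hy, ?_⟩, ?_⟩
    · exact Nat.le_div_iff_mul_le hd |>.mpr (by rw [mul_comm]; exact h1b)
    · exact Nat.le_div_iff_mul_le hd |>.mpr (by rw [mul_comm]; exact h2b)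
    · exact Nat.le_div_iff_mul_le hd |>.mpr (by rw [mul_comm, mul_add]; exact hsum)
  · rintro ⟨a, b⟩ hp
    simp only [Pairs, Finset.mem_filter, Finset.mem_product, Finset.mem_Icc] at hp ⊢
    obtain ⟨⟨⟨h1a, h1b⟩, h2a, h2b⟩, hsum⟩ := hp
    have hN1 : d * a ≤ N := le_trans (Nat.mul_le_mul_left d h1b) (Nat.mul_div_le N d)
    have hN2 : d * b ≤ N := le_trans (Nat.mul_le_mul_left d h2b) (Nat.mul_div_le N d)
    have hNs : d * a + d * b ≤ N := by
      have h1 := Nat.mul_le_mul_left d hsum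
      have h2 := Nat.mul_div_le N d
      calc d * a + d * b = d * (a + b) := by ring
        _ ≤ d * (N / d) := h1
        _ ≤ N := h2
    exact ⟨⟨⟨⟨Nat.mul_pos hd h1a, hN1⟩, Nat.mul_pos hd h2a, hN2⟩, hNs⟩, ⟨a, rfl⟩, ⟨b, rfl⟩⟩
  · rintro ⟨a, b⟩ hp
    simp only [Pairs, Finset.mem_filter] at hp
    obtain ⟨_, hd1, hd2⟩ := hp
    simp [Nat.mul_div_cancel' hd1, Nat.mul_div_cancel' hd2]
  · rintro ⟨a, b⟩ hp
    simp [Nat.mul_div_cancel_left _ hd]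

lemma moebius_identity (N : ℕ) :
    (((Pairs N).filter fun p => Nat.gcd p.1 p.2 = 1).card : ℤ) =
      ∑ d ∈ Icc 1 N, μ d * ((N/d).choose 2 : ℤ) := by
  have step1 : (((Pairs N).filter fun p => Nat.gcd p.1 p.2 = 1).card : ℤ) =
      ∑ p ∈ Pairs N, if Nat.gcd p.1 p.2 = 1 then (1:ℤ) else 0 := by
    rw [Finset.card_filter]; push_cast; rfl
  rw [step1]
  have step2 : ∀ p ∈ Pairs N, (if Nat.gcd p.1 p.2 = 1 then (1:ℤ) else 0) =
      ∑ d ∈ Icc 1 N, if d ∣ p.1 ∧ d ∣ p.2 then μ d else 0 := by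
    rintro ⟨a, b⟩ hp
    simp only [Pairs, Finset.mem_filter, Finset.mem_product, Finset.mem_Icc] at hp
    obtain ⟨⟨⟨h1a, h1b⟩, h2a, h2b⟩, hsum⟩ := hp
    have hg1 : 1 ≤ Nat.gcd a b := Nat.gcd_pos_of_pos_left b h1a
    have hgN : Nat.gcd a b ≤ N := le_trans (Nat.gcd_le_left b h1a) h1b
    have hmz : ∑ d ∈ (Nat.gcd a b).divisors, μ d = if Nat.gcd a b = 1 then 1 else 0 := by
      rw [← coe_mul_zeta_apply, moebius_mul_coe_zeta, one_apply]
    rw [← hmz]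
    have hdiv : (Nat.gcd a b).divisors = (Icc 1 (Nat.gcd a b)).filter (· ∣ Nat.gcd a b) := by
      ext d
      simp only [Nat.mem_divisors, Finset.mem_filter, Finset.mem_Icc]
      constructor
      · rintro ⟨h, -⟩
        exact ⟨⟨Nat.pos_of_dvd_of_pos h hg1, Nat.le_of_dvd hg1 h⟩, h⟩
      · rintro ⟨-, h⟩
        exact ⟨h, by omega⟩
    rw [hdiv, Finset.sum_filter]
    rw [← Finset.sum_subset (Finset.Icc_subset_Icc_right hgN) ?_]
    · refine Finset.sum_congr rfl fun d hd => ?_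
      congr 1
      simp only [eq_iff_iff]
      exact Nat.dvd_gcd_iff
    · intro d hd hnd
      simp only [Finset.mem_Icc] at hd hnd
      have hng : ¬ d ∣ Nat.gcd a b := fun h => hnd ⟨hd.1, Nat.le_of_dvd hg1 h⟩
      simp only [ite_eq_right_iff, and_imp]
      intro h1 h2
      exact (hng (Nat.dvd_gcd h1 h2)).elim
  rw [Finset.sum_congr rfl step2, Finset.sum_comm]
  refine Finset.sum_congr rfl fun d hd => ?_
  simp only [Finset.mem_Icc] at hd
  rw [← Finset.sum_filter, Finset.sum_const, nsmul_eq_mul, dvd_filter_card N d hd.1,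
    pairs_card, mul_comm]

lemma coprimeCode_card (N : ℕ) :
    (CoprimeCode N 2).card = ((Pairs N).filter fun p => Nat.gcd p.1 p.2 = 1).card := by
  rw [← Finset.card_image_of_injective (CoprimeCode N 2) (finTwoArrowEquiv ℕ).injective]
  congr 1
  ext ⟨a, b⟩
  rw [Finset.mem_image]
  constructor
  · rintro ⟨t, ht, heq⟩
    obtain ⟨rfl, rfl⟩ : t 0 = a ∧ t 1 = b :=
      ⟨congrArg Prod.fst heq, congrArg Prod.snd heq⟩
    simp only [CoprimeCode, SignalSpace, Finset.mem_filter, Fintype.mem_piFinset,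
      Finset.mem_Icc] at ht
    obtain ⟨⟨hmem, hsum⟩, hgcd⟩ := ht
    have hg : Finset.univ.gcd t = Nat.gcd (t 0) (t 1) := by
      simp [show (Finset.univ : Finset (Fin 2)) = {0,1} by decide, Finset.gcd_insert,
        Finset.gcd_singleton]
      rfl
    rw [Fin.sum_univ_two] at hsum
    rw [hg] at hgcd
    simp only [Pairs, Finset.mem_filter, Finset.mem_product, Finset.mem_Icc]
    exact ⟨⟨⟨hmem 0, hmem 1⟩, hsum⟩, hgcd⟩
  · intro h
    simp only [Pairs, Finset.mem_filter, Finset.mem_product, Finset.mem_Icc] at h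
    obtain ⟨⟨⟨⟨h1a, h1b⟩, h2a, h2b⟩, hsum⟩, hgcd⟩ := h
    refine ⟨![a, b], ?_, ?_⟩
    · simp only [CoprimeCode, SignalSpace, Finset.mem_filter, Fintype.mem_piFinset,
        Finset.mem_Icc]
      refine ⟨⟨fun i => ?_, ?_⟩, ?_⟩
      · fin_cases i <;> simp [h1a, h1b, h2a, h2b]
      · rw [Fin.sum_univ_two]; simpa using hsum
      · have hg : Finset.univ.gcd ![a,b] = Nat.gcd a b := by
          simp [show (Finset.univ : Finset (Fin 2)) = {0,1} by decide, Finset.gcd_insert,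
            Finset.gcd_singleton]
          rfl
        rw [hg]; exact hgcd
    · simp [finTwoArrowEquiv]

lemma choose_two_real (m : ℕ) : (m.choose 2 : ℝ) = m * ((m:ℝ) - 1)/2 := by
  cases m with
  | zero => simp
  | succ n =>
    have h2 : ((n+1).choose 2) * 2 = (n+1)*n := by
      rw [Nat.choose_two_right]
      simp only [Nat.succ_sub_one, mul_comm (n+1) n]
      simpa using Nat.div_mul_cancel (Nat.even_mul_succ_self n).two_dvd
    have := congrArg (fun k : ℕ => (k : ℝ)) h2
    push_cast at this
    push_cast
    linarith

lemma summable_mu_over_sq : Summable (fun d : ℕ => ((μ d : ℝ))/(d:ℝ)^2) := by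
  apply Summable.of_norm_bounded (g := fun d : ℕ => 1/(d:ℝ)^2)
    (Real.summable_one_div_nat_pow.mpr one_lt_two)
  intro d
  rcases Nat.eq_zero_or_pos d with rfl | hd
  · simp
  · rw [Real.norm_eq_abs, abs_div, abs_of_nonneg (by positivity : (0:ℝ) ≤ (d:ℝ)^2)]
    gcongr
    exact_mod_cast abs_moebius_le_one (n := d)

lemma mu_tsum_eq : ∑' d : ℕ, ((μ d : ℝ))/(d:ℝ)^2 = 6/Real.pi^2 := by
  have hs : (1:ℝ) < (2:ℂ).re := by norm_num
  have h1 : LSeries (fun n => ((μ n : ℤ) : ℂ)) 2 = 6/(Real.pi:ℂ)^2 := by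
    have h2 := LSeries_zeta_mul_Lseries_moebius hs
    rw [LSeries_zeta_eq_riemannZeta hs, riemannZeta_two] at h2
    have hpi : ((Real.pi:ℂ))^2 ≠ 0 := by
      simp [Real.pi_ne_zero]
    field_simp at h2 ⊢
    linear_combination h2
  have h3 : ((∑' d : ℕ, ((μ d : ℝ))/(d:ℝ)^2 : ℝ) : ℂ) = LSeries (fun n => ((μ n : ℤ) : ℂ)) 2 := by
    rw [Complex.ofReal_tsum]
    rw [LSeries]
    congr 1
    ext n
    rcases Nat.eq_zero_or_pos n with rfl | hn
    · simp [LSeries.term]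
    · rw [LSeries.term_of_ne_zero (by omega)]
      push_cast
      norm_num
  have h4 : ((∑' d : ℕ, ((μ d : ℝ))/(d:ℝ)^2 : ℝ) : ℂ) = ((6/Real.pi^2 : ℝ) : ℂ) := by
    rw [h3.trans h1]; push_cast; ring
  exact_mod_cast h4

lemma inv_nat_sub_one_tendsto : Tendsto (fun N : ℕ => 1/((N:ℝ) - 1)) atTop (nhds 0) := by
  have h : Tendsto (fun N : ℕ => (N:ℝ) - 1) atTop atTop :=
    tendsto_atTop_add_const_right atTop (-1) tendsto_natCast_atTop_atTop
  simpa [one_div, Function.comp_def] using tendsto_inv_atTop_zero.comp h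

lemma one_div_nat_tendsto : Tendsto (fun N : ℕ => 1/(N:ℝ)) atTop (nhds 0) :=
  tendsto_one_div_atTop_nhds_zero_nat

lemma div_floor_tendsto (d : ℕ) (hd : 1 ≤ d) :
    Tendsto (fun N : ℕ => ((N/d : ℕ) : ℝ)/(N:ℝ)) atTop (nhds (1/(d:ℝ))) := by
  have hdR : (0:ℝ) < d := by exact_mod_cast hd
  have hlow : Tendsto (fun N : ℕ => 1/(d:ℝ) - 1/(N:ℝ)) atTop (nhds (1/(d:ℝ))) := by
    simpa using tendsto_const_nhds.sub one_div_nat_tendsto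
  have hhigh : Tendsto (fun N : ℕ => 1/(d:ℝ) + 1/(N:ℝ)) atTop (nhds (1/(d:ℝ))) := by
    simpa using tendsto_const_nhds.add one_div_nat_tendsto
  refine tendsto_of_tendsto_of_tendsto_of_le_of_le' hlow hhigh ?_ ?_
  · filter_upwards [eventually_ge_atTop 1] with N hN
    have hNR : (0:ℝ) < N := by exact_mod_cast hN
    have key : (N:ℝ) < d * ((N/d : ℕ) : ℝ) + d := by
      have h1 : N < d * (N/d) + d := by
        have h2 := Nat.div_add_mod N d
        have h3 : N % d < d := Nat.mod_lt N (by omega)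
        omega
      exact_mod_cast (by exact_mod_cast h1 : (N:ℝ) < ((d * (N/d) + d : ℕ) : ℝ))
    rw [sub_le_iff_le_add, ← add_div, div_le_div_iff₀ hdR hNR]
    nlinarith [key]
  · filter_upwards [eventually_ge_atTop 1] with N hN
    have hNR : (0:ℝ) < N := by exact_mod_cast hN
    have key : d * ((N/d : ℕ) : ℝ) ≤ N := by
      exact_mod_cast (by exact_mod_cast Nat.mul_div_le N d : ((d * (N/d) : ℕ) : ℝ) ≤ (N:ℝ))
    rw [div_le_iff₀ hNR]
    calc ((N/d : ℕ) : ℝ) ≤ (N:ℝ)/d := by rw [le_div_iff₀ hdR]; linarith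
      _ = 1/d * N := by ring
      _ ≤ (1/d + 1/N) * N := by
          apply mul_le_mul_of_nonneg_right _ (le_of_lt hNR)
          have : (0:ℝ) < 1/N := by positivity
          linarith

lemma nat_div_sub_one_tendsto (d : ℕ) (hd : 1 ≤ d) :
    Tendsto (fun N : ℕ => (((N/d : ℕ) : ℝ) - 1)/((N:ℝ) - 1)) atTop (nhds (1/(d:ℝ))) := by
  have hC : Tendsto (fun N : ℕ => (N:ℝ)/((N:ℝ) - 1)) atTop (nhds 1) := by
    have : Tendsto (fun N : ℕ => 1 + 1/((N:ℝ) - 1)) atTop (nhds 1) := by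
      simpa using tendsto_const_nhds.add inv_nat_sub_one_tendsto
    apply this.congr'
    filter_upwards [eventually_ge_atTop 2] with N hN
    have h1 : (N:ℝ) - 1 ≠ 0 := by
      have : (2:ℝ) ≤ N := by exact_mod_cast hN
      intro h; nlinarith
    field_simp
    ring
  have hmain : Tendsto (fun N : ℕ => (((N/d : ℕ) : ℝ)/(N:ℝ)) * ((N:ℝ)/((N:ℝ) - 1)) - 1/((N:ℝ)-1))
      atTop (nhds (1/(d:ℝ))) := by
    have := (div_floor_tendsto d hd).mul hC |>.sub inv_nat_sub_one_tendsto
    simpa using this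
  apply hmain.congr'
  filter_upwards [eventually_ge_atTop 2] with N hN
  have h2 : (2:ℝ) ≤ N := by exact_mod_cast hN
  have h0 : (N:ℝ) ≠ 0 := by nlinarith
  have h1 : (N:ℝ) - 1 ≠ 0 := by intro h; nlinarith
  field_simp

lemma ratio_tendsto (d : ℕ) (hd : 1 ≤ d) :
    Tendsto (fun N : ℕ => (((N/d : ℕ).choose 2 : ℝ))/((N.choose 2 : ℕ) : ℝ)) atTop
      (nhds (1/(d:ℝ)^2)) := by
  have := (div_floor_tendsto d hd).mul (nat_div_sub_one_tendsto d hd)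
  have heq : (1/(d:ℝ)) * (1/(d:ℝ)) = 1/(d:ℝ)^2 := by ring
  rw [heq] at this
  apply this.congr'
  filter_upwards [eventually_ge_atTop 2] with N hN
  have h2 : (2:ℝ) ≤ N := by exact_mod_cast hN
  have h0 : (N:ℝ) ≠ 0 := by nlinarith
  have h1 : (N:ℝ) - 1 ≠ 0 := by intro h; nlinarith
  rw [choose_two_real, choose_two_real]
  field_simp

end CoprimeDensityAux

open CoprimeDensityAux ArithmeticFunction ArithmeticFunction.Moebius in
theorem coprimeCode_density_two_events :
    Tendsto (fun N : ℕ => ((CoprimeCode N 2).card : ℝ) / (N.choose 2 : ℝ)) atTop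
      (nhds (6 / Real.pi ^ 2)) := by
  set f : ℕ → ℕ → ℝ := fun N d => (μ d : ℝ) * (((N/d : ℕ).choose 2 : ℝ)/((N.choose 2 : ℕ) : ℝ))
    with hf
  set g : ℕ → ℝ := fun d => (μ d : ℝ)/(d:ℝ)^2 with hg
  have hbound_sum : Summable (fun d : ℕ => 2/(d:ℝ)^2) := by
    have := (Real.summable_one_div_nat_pow (p := 2)).mpr one_lt_two |>.mul_left 2
    apply this.congr
    intro d; ring
  have hab : ∀ d : ℕ, Tendsto (fun N => f N d) atTop (nhds (g d)) := by
    intro d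
    rcases Nat.eq_zero_or_pos d with rfl | hd
    · simpa [hf, hg] using tendsto_const_nhds (α := ℝ) (f := atTop (α := ℕ))
    · have := (ratio_tendsto d hd).const_mul ((μ d : ℝ))
      simpa [hf, hg, mul_one_div, div_eq_mul_inv] using this
  have hb : ∀ᶠ N in atTop, ∀ d : ℕ, ‖f N d‖ ≤ 2/(d:ℝ)^2 := by
    filter_upwards [eventually_ge_atTop 2] with N hN d
    rcases Nat.eq_zero_or_pos d with rfl | hd
    · simp [hf]
    have hNR : (2:ℝ) ≤ N := by exact_mod_cast hN
    have hdR : (1:ℝ) ≤ d := by exact_mod_cast hd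
    have hQD : ((N/d : ℕ) : ℝ) * d ≤ N := by
      exact_mod_cast (by exact_mod_cast Nat.div_mul_le_self N d : (((N/d) * d : ℕ) : ℝ) ≤ (N:ℝ))
    have hQ0 : (0:ℝ) ≤ ((N/d : ℕ) : ℝ) := by positivity
    have hmu : |(μ d : ℝ)| ≤ 1 := by exact_mod_cast abs_moebius_le_one (n := d)
    have hratio : (((N/d : ℕ).choose 2 : ℝ))/((N.choose 2 : ℕ) : ℝ) ≤ 2/(d:ℝ)^2 := by
      rw [choose_two_real, choose_two_real, div_le_div_iff₀ (by nlinarith) (by positivity)]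
      nlinarith [mul_nonneg hQ0 (le_trans zero_le_one hdR), sq_nonneg ((N/d : ℕ) : ℝ),
        mul_le_mul hQD hQD (mul_nonneg hQ0 (le_trans zero_le_one hdR)) (by nlinarith)]
    have hratio0 : (0:ℝ) ≤ (((N/d : ℕ).choose 2 : ℝ))/((N.choose 2 : ℕ) : ℝ) := by positivity
    rw [hf]
    rw [Real.norm_eq_abs, abs_mul, abs_of_nonneg hratio0]
    calc |(μ d : ℝ)| * ((((N/d : ℕ).choose 2 : ℝ))/((N.choose 2 : ℕ) : ℝ))
        ≤ 1 * ((((N/d : ℕ).choose 2 : ℝ))/((N.choose 2 : ℕ) : ℝ)) :=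
          mul_le_mul_of_nonneg_right hmu hratio0
      _ ≤ 2/(d:ℝ)^2 := by rw [one_mul]; exact hratio
  have htan := tendsto_tsum_of_dominated_convergence hbound_sum hab hb
  rw [show ∑' d, g d = 6/Real.pi^2 from mu_tsum_eq] at htan
  apply htan.congr
  intro N
  have hsupp : ∀ d ∉ Finset.Icc 1 N, f N d = 0 := by
    intro d hd
    simp only [Finset.mem_Icc, not_and_or, not_le] at hd
    rcases hd with hd | hd
    · interval_cases d
      simp [hf]
    · have : N / d = 0 := Nat.div_eq_of_lt hd
      simp [hf, this]
  rw [tsum_eq_sum hsupp]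
  have hint : (((CoprimeCode N 2).card : ℤ) : ℝ) =
      ((∑ d ∈ Finset.Icc 1 N, μ d * ((N/d).choose 2 : ℤ) : ℤ) : ℝ) := by
    exact_mod_cast congrArg (fun z : ℤ => (z : ℝ))
      (by rw [coprimeCode_card]; exact moebius_identity N)
  push_cast at hint
  rw [hf]
  simp only
  have hterm : ∀ d ∈ Finset.Icc 1 N, (μ d : ℝ) * (((N/d : ℕ).choose 2 : ℝ)/((N.choose 2 : ℕ) : ℝ))
      = ((μ d : ℝ) * ((N/d : ℕ).choose 2 : ℝ))/((N.choose 2 : ℕ) : ℝ) := fun d _ => by ring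
  rw [Finset.sum_congr rfl hterm, ← Finset.sum_div, ← hint]
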